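/- If Λ ⊆ ℝ^N is a Delone set and there exists a finite set F with Λ − Λ ⊆ Λ + F, then Λ − Λ is uniformly discrete. -/
import Mathlib


open scoped Pointwise

open Metric Set

lemma sep_ball_finite {E : Type*} [NormedAddCommGroup E] [NormedSpace ℝ E]
    [FiniteDimensional ℝ E] (Λ : Set E) (r : ℝ) (hr : 0 < r)
    (hud : ∀ x ∈ Λ, ∀ y ∈ Λ, x ≠ y → 2 * r ≤ dist x y) (c : E) (ρ : ℝ) :
    (Λ ∩ closedBall c ρ).Finite := by
  have htb : TotallyBounded (closedBall c ρ) :=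
    (isCompact_closedBall c ρ).totallyBounded
  rcases totallyBounded_iff.1 htb r hr with ⟨t, htf, hcov⟩
  have hsub : Λ ∩ closedBall c ρ ⊆ ⋃ y ∈ t, Λ ∩ ball y r := by
    intro x ⟨hxΛ, hxB⟩
    rcases mem_iUnion₂.1 (hcov hxB) with ⟨y, hy, hxy⟩
    exact mem_iUnion₂.2 ⟨y, hy, hxΛ, hxy⟩
  refine Finite.subset (htf.biUnion fun y _ => ?_) hsub
  refine Set.Subsingleton.finite fun a ⟨haΛ, ha⟩ b ⟨hbΛ, hb⟩ => ?_
  by_contra hab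
  have := hud a haΛ b hbΛ hab
  have : dist a b < 2 * r := by
    calc dist a b ≤ dist a y + dist y b := dist_triangle a y b
    _ < r + r := by
        rw [mem_ball] at ha hb
        rw [dist_comm y b] at *
        linarith
    _ = 2 * r := by ring
  linarith

theorem lagarias_implies_meyer (N : ℕ) (Λ : Set (EuclideanSpace ℝ (Fin N)))
    (r R : ℝ) (hr : 0 < r) (hR : 0 < R)
    (hud : ∀ x ∈ Λ, ∀ y ∈ Λ, x ≠ y → 2 * r ≤ dist x y)
    (hrd : ∀ y : EuclideanSpace ℝ (Fin N), ∃ x ∈ Λ, dist x y ≤ R)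
    (F : Set (EuclideanSpace ℝ (Fin N))) (hF : F.Finite)
    (h : Λ - Λ ⊆ Λ + F) :
    ∃ s > (0 : ℝ), ∀ u ∈ Λ - Λ, ∀ v ∈ Λ - Λ, u ≠ v → s ≤ dist u v := by
  classical
  set G : Set (EuclideanSpace ℝ (Fin N)) := F + (F - F) with hGdef
  have hG : G.Finite := hF.add (hF.sub hF)
  -- key: differences of Λ-Λ lie in Λ + G
  have key : ∀ u ∈ Λ - Λ, ∀ v ∈ Λ - Λ, u - v ∈ Λ + G := by
    intro u hu v hv
    rcases Set.mem_sub.1 hu with ⟨a, ha, b, hb, rfl⟩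
    rcases Set.mem_sub.1 hv with ⟨c, hc, d, hd, rfl⟩
    have hac : a - c ∈ Λ + F := h (Set.sub_mem_sub ha hc)
    have hbd : b - d ∈ Λ + F := h (Set.sub_mem_sub hb hd)
    rcases Set.mem_add.1 hac with ⟨p, hp, f, hf, hpf⟩
    rcases Set.mem_add.1 hbd with ⟨q, hq, g, hg, hqg⟩
    have hpq : p - q ∈ Λ + F := h (Set.sub_mem_sub hp hq)
    rcases Set.mem_add.1 hpq with ⟨m, hm, e, he, hme⟩
    have : a - b - (c - d) = m + (e + (f - g)) := by
      have h1 : a - c = p + f := hpf.symm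
      have h2 : b - d = q + g := hqg.symm
      have h3 : p - q = m + e := hme.symm
      have : a - b - (c - d) = (a - c) - (b - d) := by abel
      rw [this, h1, h2]
      have : p + f - (q + g) = (p - q) + (f - g) := by abel
      rw [this, h3]; abel
    rw [this]
    exact Set.add_mem_add hm (Set.add_mem_add he (Set.sub_mem_sub hf hg))
  -- the finite set of small nonzero candidates
  set T : Set (EuclideanSpace ℝ (Fin N)) := ((Λ + G) ∩ closedBall 0 1) \ {0} with hTdef
  have hTfin : T.Finite := by
    have hsub : T ⊆ ⋃ g ∈ G, (fun x => x + g) '' (Λ ∩ closedBall (-g) 1) := by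
      rintro w ⟨⟨hwΛG, hwB⟩, -⟩
      rcases Set.mem_add.1 hwΛG with ⟨x, hx, g, hg, rfl⟩
      refine mem_iUnion₂.2 ⟨g, hg, ⟨x, ⟨hx, ?_⟩, rfl⟩⟩
      rw [mem_closedBall] at hwB ⊢
      calc dist x (-g) = dist (x + g) 0 := by
            rw [dist_eq_norm, dist_eq_norm]; congr 1; abel
      _ ≤ 1 := hwB
    exact Finite.subset (hG.biUnion fun g _ =>
      ((sep_ball_finite Λ r hr hud (-g) 1).image _)) hsub
  -- choose s
  by_cases hTne : T.Nonempty
  · rcases Set.exists_min_image T (fun w => ‖w‖) hTfin hTne with ⟨w₀, hw₀T, hw₀min⟩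
    have hw₀pos : 0 < ‖w₀‖ := by
      rcases hw₀T with ⟨-, hne⟩
      simpa [norm_pos_iff] using hne
    refine ⟨min ‖w₀‖ 1, lt_min hw₀pos one_pos, ?_⟩
    intro u hu v hv huv
    by_contra hlt
    push_neg at hlt
    have hd1 : dist u v ≤ 1 := le_of_lt (lt_of_lt_of_le hlt (min_le_right _ _))
    have hw : u - v ∈ T := by
      refine ⟨⟨key u hu v hv, ?_⟩, ?_⟩
      · rw [mem_closedBall, dist_eq_norm, sub_zero, ← dist_eq_norm]; exact hd1
      · simp only [Set.mem_singleton_iff, sub_eq_zero]; exact huv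
    have := hw₀min _ hw
    rw [← dist_eq_norm] at this
    have : min ‖w₀‖ 1 ≤ dist u v := le_trans (min_le_left _ _) this
    linarith
  · refine ⟨1, one_pos, ?_⟩
    intro u hu v hv huv
    by_contra hlt
    push_neg at hlt
    exact hTne ⟨u - v, ⟨key u hu v hv, by
      rw [mem_closedBall, dist_eq_norm, sub_zero, ← dist_eq_norm]; exact le_of_lt hlt⟩,
      by simp only [Set.mem_singleton_iff, sub_eq_zero]; exact huv⟩
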